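/- (Pointwise comparison of truncations) Let m≥1, φ(X)=|X|^{m-1}X, and M>0. Let a,b∈ℝ with |a|≤2M and |b|≤2M. Set either ã=max{a,M/4}, b̃=max{b,M/4} with a level k∈[M/2,2M], or ã=min{a,−M/4}, b̃=min{b,−M/4} with a level k∈[−2M,−M/2]. Then for both the positive and the negative truncations one has M^{m−1}·|(ã−k)_± − (b̃−k)_±|² ≤ 4^m·((φ(a)−φ(k))_± − (φ(b)−φ(k))_±)·((a−k)_± − (b−k)_±). -/
import Mathlib


open Set

noncomputable section

/-- The nonlinearity φ(X) = |X|^{m-1} X. -/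
def phi (m X : ℝ) : ℝ := |X| ^ (m - 1) * X

/-- Positive part. -/
def posP (a : ℝ) : ℝ := max a 0

lemma phi_neg (m x : ℝ) : phi m (-x) = - phi m x := by
  simp [phi, abs_neg]

lemma phi_mono (m : ℝ) (hm : 1 ≤ m) {x y : ℝ} (hxy : x ≤ y) : phi m x ≤ phi m y := by
  have hm0 : 0 ≤ m - 1 := by linarith
  have key : ∀ u v : ℝ, 0 ≤ u → u ≤ v → phi m u ≤ phi m v := by
    intro u v hu huv
    have hv : 0 ≤ v := le_trans hu huv
    simp only [phi, abs_of_nonneg hu, abs_of_nonneg hv]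
    exact mul_le_mul (Real.rpow_le_rpow hu huv hm0) huv hu (Real.rpow_nonneg hv _)
  rcases le_total 0 x with hx | hx
  · exact key x y hx hxy
  · rcases le_total 0 y with hy | hy
    · have h1 : phi m x ≤ 0 := by
        have := Real.rpow_nonneg (abs_nonneg x) (m - 1)
        exact mul_nonpos_of_nonneg_of_nonpos this hx
      have h2 : 0 ≤ phi m y := by
        have := Real.rpow_nonneg (abs_nonneg y) (m - 1)
        exact mul_nonneg this hy
      linarith
    · have := key (-y) (-x) (by linarith) (by linarith)
      rw [phi_neg, phi_neg] at this; linarith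

lemma key_ineq (m M x y : ℝ) (hm : 1 ≤ m) (hM : 0 < M) (hy : M / 4 ≤ y) (hxy : x ≤ y) :
    M ^ (m - 1) * (y - x) ≤ 4 ^ m * (phi m y - phi m x) := by
  have hm0 : 0 ≤ m - 1 := by linarith
  have hy0 : 0 < y := lt_of_lt_of_le (by linarith) hy
  have h4 : (4:ℝ) ^ m = 4 ^ (m - 1) * 4 := by
    have : (4:ℝ) ^ m = 4 ^ (m - 1) * 4 ^ (1:ℝ) := by
      rw [← Real.rpow_add (by norm_num)]; norm_num
    simpa [Real.rpow_one] using this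
  have h4n : (0:ℝ) ≤ 4 ^ (m - 1) := Real.rpow_nonneg (by norm_num) _
  have hyn : (0:ℝ) ≤ y ^ (m - 1) := Real.rpow_nonneg hy0.le _
  have hMy : M ^ (m - 1) ≤ 4 ^ (m - 1) * y ^ (m - 1) := by
    calc M ^ (m - 1) ≤ (4 * y) ^ (m - 1) := Real.rpow_le_rpow hM.le (by linarith) hm0
      _ = 4 ^ (m - 1) * y ^ (m - 1) := Real.mul_rpow (by norm_num) hy0.le
  have hphiy : phi m y = y ^ (m - 1) * y := by simp [phi, abs_of_pos hy0]
  rcases le_or_gt 0 x with hx | hx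
  · have hphix : phi m x = x ^ (m - 1) * x := by simp [phi, abs_of_nonneg hx]
    have hx2 : x ^ (m - 1) ≤ y ^ (m - 1) := Real.rpow_le_rpow hx hxy hm0
    have h1 : x ^ (m - 1) * x ≤ y ^ (m - 1) * x := mul_le_mul_of_nonneg_right hx2 hx
    rw [hphiy, hphix]
    nlinarith [mul_le_mul_of_nonneg_right hMy (sub_nonneg.mpr hxy),
      mul_nonneg hyn (sub_nonneg.mpr hxy), mul_nonneg h4n (mul_nonneg hyn (sub_nonneg.mpr hxy))]
  · set u := -x with hu
    have hu0 : 0 < u := by simp [hu]; linarith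
    have hphix : phi m x = -(u ^ (m - 1) * u) := by
      have : x = -u := by simp [hu]
      rw [this, phi_neg]
      simp [phi, abs_of_pos hu0]
    have hun : (0:ℝ) ≤ u ^ (m - 1) := Real.rpow_nonneg hu0.le _
    have f1 : M ^ (m - 1) * y ≤ 4 ^ (m - 1) * (y ^ (m - 1) * y) := by
      nlinarith [mul_le_mul_of_nonneg_right hMy hy0.le]
    have f2 : M ^ (m - 1) * u ≤ 4 ^ (m - 1) * (y ^ (m - 1) * y) + 4 ^ (m - 1) * (u ^ (m - 1) * u) := by
      rcases le_or_gt (M / 4) u with hcu | hcu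
      · have hMu : M ^ (m - 1) ≤ 4 ^ (m - 1) * u ^ (m - 1) := by
          calc M ^ (m - 1) ≤ (4 * u) ^ (m - 1) := Real.rpow_le_rpow hM.le (by linarith) hm0
            _ = 4 ^ (m - 1) * u ^ (m - 1) := Real.mul_rpow (by norm_num) hu0.le
        nlinarith [mul_le_mul_of_nonneg_right hMu hu0.le, mul_nonneg h4n (mul_nonneg hyn hy0.le)]
      · have huy : u ≤ y := by linarith
        have h1 : M ^ (m - 1) * u ≤ (4 ^ (m - 1) * y ^ (m - 1)) * u :=
          mul_le_mul_of_nonneg_right hMy hu0.le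
        nlinarith [mul_le_mul_of_nonneg_left huy (mul_nonneg h4n hyn),
          mul_nonneg h4n (mul_nonneg hun hu0.le)]
    rw [hphiy, hphix, h4]
    nlinarith [mul_nonneg h4n (mul_nonneg hyn hy0.le), mul_nonneg h4n (mul_nonneg hun hu0.le)]

lemma posP_of_nonpos {x : ℝ} (h : x ≤ 0) : posP x = 0 := max_eq_right h

lemma posP_of_nonneg {x : ℝ} (h : 0 ≤ x) : posP x = x := max_eq_left h

lemma posP_mono {x y : ℝ} (h : x ≤ y) : posP x ≤ posP y := max_le_max h le_rfl

lemma posP_max_eq {x c k : ℝ} (h : c ≤ k) : posP (max x c - k) = posP (x - k) := by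
  rcases le_total x c with h' | h'
  · rw [max_eq_right h', posP_of_nonpos (by linarith), posP_of_nonpos (by linarith)]
  · rw [max_eq_left h']

lemma posP_min_eq {x c k : ℝ} (h : k ≤ -c) : posP (k - min x (-c)) = posP (k - x) := by
  rcases le_total x (-c) with h' | h'
  · rw [min_eq_left h']
  · rw [min_eq_right h', posP_of_nonpos (by linarith), posP_of_nonpos (by linarith)]

lemma conj1 (m M : ℝ) (hm : 1 ≤ m) (hM : 0 < M) (a b k : ℝ) (hk : M / 2 ≤ k) :
    M ^ (m - 1) * (posP (a - k) - posP (b - k)) ^ 2 ≤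
      4 ^ m * ((posP (phi m a - phi m k) - posP (phi m b - phi m k)) *
        (posP (a - k) - posP (b - k))) := by
  have h4n : (0:ℝ) ≤ 4 ^ m := Real.rpow_nonneg (by norm_num) m
  have hMn : (0:ℝ) ≤ M ^ (m - 1) := Real.rpow_nonneg hM.le _
  suffices main : ∀ a b : ℝ, b ≤ a →
      M ^ (m - 1) * (posP (a - k) - posP (b - k)) ^ 2 ≤
      4 ^ m * ((posP (phi m a - phi m k) - posP (phi m b - phi m k)) *
        (posP (a - k) - posP (b - k))) by
    rcases le_total b a with h | h
    · exact main a b h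
    · have H := main b a h
      have e1 : (posP (a - k) - posP (b - k)) ^ 2 = (posP (b - k) - posP (a - k)) ^ 2 := by ring
      have e2 : (posP (phi m a - phi m k) - posP (phi m b - phi m k)) *
            (posP (a - k) - posP (b - k))
          = (posP (phi m b - phi m k) - posP (phi m a - phi m k)) *
            (posP (b - k) - posP (a - k)) := by ring
      rw [e1, e2]; exact H
  intro a b hab
  rcases le_or_gt a k with hak | hak
  · rw [posP_of_nonpos (by linarith : a - k ≤ 0), posP_of_nonpos (by linarith : b - k ≤ 0)]
    norm_num
  · have hka : k ≤ a := hak.le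
    have pa : posP (a - k) = a - k := posP_of_nonneg (by linarith)
    have pb : posP (b - k) = max b k - k := by
      rcases le_total b k with h' | h'
      · rw [posP_of_nonpos (by linarith), max_eq_right h']; ring
      · rw [posP_of_nonneg (by linarith), max_eq_left h']
    have Ea : posP (phi m a - phi m k) = phi m a - phi m k :=
      posP_of_nonneg (sub_nonneg.mpr (phi_mono m hm hka))
    have Eb : posP (phi m b - phi m k) = phi m (max b k) - phi m k := by
      rcases le_total b k with h' | h'
      · rw [posP_of_nonpos (sub_nonpos.mpr (phi_mono m hm h')), max_eq_right h']; ring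
      · rw [posP_of_nonneg (sub_nonneg.mpr (phi_mono m hm h')), max_eq_left h']
    have hca : max b k ≤ a := max_le hab hka
    have key := key_ineq m M (max b k) a hm hM (by linarith) hca
    rw [pa, pb, Ea, Eb]
    nlinarith [mul_le_mul_of_nonneg_right key (sub_nonneg.mpr hca)]

lemma conj2 (m M : ℝ) (hm : 1 ≤ m) (hM : 0 < M) (a b k : ℝ) (hk : M / 2 ≤ k) :
    M ^ (m - 1) * (posP (k - max a (M / 4)) - posP (k - max b (M / 4))) ^ 2 ≤
      4 ^ m * ((posP (phi m k - phi m a) - posP (phi m k - phi m b)) *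
        (posP (k - a) - posP (k - b))) := by
  have h4n : (0:ℝ) ≤ 4 ^ m := Real.rpow_nonneg (by norm_num) m
  have hMn : (0:ℝ) ≤ M ^ (m - 1) := Real.rpow_nonneg hM.le _
  suffices main : ∀ a b : ℝ, a ≤ b →
      M ^ (m - 1) * (posP (k - max a (M / 4)) - posP (k - max b (M / 4))) ^ 2 ≤
      4 ^ m * ((posP (phi m k - phi m a) - posP (phi m k - phi m b)) *
        (posP (k - a) - posP (k - b))) by
    rcases le_total a b with h | h
    · exact main a b h
    · have H := main b a h
      have e1 : (posP (k - max a (M / 4)) - posP (k - max b (M / 4))) ^ 2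
          = (posP (k - max b (M / 4)) - posP (k - max a (M / 4))) ^ 2 := by ring
      have e2 : (posP (phi m k - phi m a) - posP (phi m k - phi m b)) *
            (posP (k - a) - posP (k - b))
          = (posP (phi m k - phi m b) - posP (phi m k - phi m a)) *
            (posP (k - b) - posP (k - a)) := by ring
      rw [e1, e2]; exact H
  intro a b hab
  have hAB : max a (M / 4) ≤ max b (M / 4) := max_le_max hab le_rfl
  have hA4 : M / 4 ≤ max a (M / 4) := le_max_right _ _
  have haA : a ≤ max a (M / 4) := le_max_left _ _
  have hE : 0 ≤ posP (phi m k - phi m a) - posP (phi m k - phi m b) :=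
    sub_nonneg.mpr (posP_mono (by have := phi_mono m hm hab; linarith))
  have hF : 0 ≤ posP (k - a) - posP (k - b) := sub_nonneg.mpr (posP_mono (by linarith))
  rcases le_or_gt k (max a (M / 4)) with h | h
  · rw [posP_of_nonpos (by linarith : k - max a (M / 4) ≤ 0),
      posP_of_nonpos (by linarith : k - max b (M / 4) ≤ 0)]
    nlinarith [mul_nonneg h4n (mul_nonneg hE hF)]
  · have hak : a < k := lt_of_le_of_lt haA h
    have pA : posP (k - max a (M / 4)) = k - max a (M / 4) := posP_of_nonneg (by linarith)
    have pB : posP (k - max b (M / 4)) = k - max (min b k) (M / 4) := by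
      rcases le_total b (M / 4) with h1 | h1
      · have hbk : b ≤ k := by linarith
        rw [max_eq_right h1, min_eq_left hbk, max_eq_right h1,
          posP_of_nonneg (by linarith)]
      · rcases le_total b k with h2 | h2
        · rw [max_eq_left h1, min_eq_left h2, max_eq_left h1, posP_of_nonneg (by linarith)]
        · rw [max_eq_left h1, min_eq_right h2, max_eq_left (by linarith : M / 4 ≤ k),
            posP_of_nonpos (by linarith)]
          ring
    rcases le_or_gt (min b k) (M / 4) with hc4 | hc4
    · have hD0 : posP (k - max a (M / 4)) - posP (k - max b (M / 4)) = 0 := by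
        have hge : posP (k - max b (M / 4)) ≤ posP (k - max a (M / 4)) :=
          posP_mono (by linarith)
        have hle : posP (k - max a (M / 4)) - posP (k - max b (M / 4)) ≤ 0 := by
          rw [pA, pB, max_eq_right hc4]; linarith
        linarith
      rw [hD0]
      nlinarith [mul_nonneg h4n (mul_nonneg hE hF)]
    · have pB' : posP (k - max b (M / 4)) = k - min b k := by
        rw [pB, max_eq_left hc4.le]
      have hAc : max a (M / 4) ≤ min b k := by
        have := posP_mono (show k - max b (M / 4) ≤ k - max a (M / 4) by linarith)
        rw [pA, pB'] at this; linarith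
      have hac : a ≤ min b k := le_trans haA hAc
      have pFa : posP (k - a) = k - a := posP_of_nonneg (by linarith)
      have pFb : posP (k - b) = k - min b k := by
        rcases le_total b k with h2 | h2
        · rw [posP_of_nonneg (by linarith), min_eq_left h2]
        · rw [posP_of_nonpos (by linarith), min_eq_right h2]; ring
      have Ea : posP (phi m k - phi m a) = phi m k - phi m a :=
        posP_of_nonneg (sub_nonneg.mpr (phi_mono m hm hak.le))
      have Eb : posP (phi m k - phi m b) = phi m k - phi m (min b k) := by
        rcases le_total b k with h2 | h2
        · rw [posP_of_nonneg (sub_nonneg.mpr (phi_mono m hm h2)), min_eq_left h2]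
        · rw [posP_of_nonpos (sub_nonpos.mpr (phi_mono m hm h2)), min_eq_right h2]; ring
      have key := key_ineq m M a (min b k) hm hM hc4.le hac
      have hEc : 0 ≤ phi m (min b k) - phi m a := sub_nonneg.mpr (phi_mono m hm hac)
      rw [pA, pB', pFa, pFb, Ea, Eb]
      nlinarith [mul_le_mul_of_nonneg_right key (sub_nonneg.mpr hAc),
        mul_nonneg (mul_nonneg hMn (sub_nonneg.mpr hAc)) (sub_nonneg.mpr haA),
        mul_nonneg (mul_nonneg h4n hEc) (sub_nonneg.mpr haA)]

/-- Pointwise comparison of truncations, Lemma 4.1: for m ≥ 1, M > 0,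
|a|,|b| ≤ 2M, with either ã = max{a, M/4}, b̃ = max{b, M/4} and k ∈ [M/2, 2M], or
ã = min{a, -M/4}, b̃ = min{b, -M/4} and k ∈ [-2M, -M/2], one has, for both truncations,
M^{m-1}|(ã-k)_± - (b̃-k)_±|² ≤ 4^m ((φ(a)-φ(k))_± - (φ(b)-φ(k))_±)((a-k)_± - (b-k)_±). -/
theorem pointwise_truncation_comparison
    (m : ℝ) (hm : 1 ≤ m) (M : ℝ) (hM : 0 < M)
    (a b k ta tb : ℝ) (ha : |a| ≤ 2 * M) (hb : |b| ≤ 2 * M)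
    (hcase :
      (ta = max a (M / 4) ∧ tb = max b (M / 4) ∧ k ∈ Icc (M / 2) (2 * M)) ∨
      (ta = min a (-(M / 4)) ∧ tb = min b (-(M / 4)) ∧ k ∈ Icc (-(2 * M)) (-(M / 2)))) :
    M ^ (m - 1) * (posP (ta - k) - posP (tb - k)) ^ 2 ≤
        (4 : ℝ) ^ m * ((posP (phi m a - phi m k) - posP (phi m b - phi m k)) *
          (posP (a - k) - posP (b - k))) ∧
    M ^ (m - 1) * (posP (k - ta) - posP (k - tb)) ^ 2 ≤
        (4 : ℝ) ^ m * ((posP (phi m k - phi m a) - posP (phi m k - phi m b)) *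
          (posP (k - a) - posP (k - b))) := by
  rcases hcase with ⟨h1, h2, hk⟩ | ⟨h1, h2, hk⟩
  · obtain ⟨hk1, hk2⟩ := hk
    constructor
    · have e : posP (ta - k) = posP (a - k) := by
        rw [h1]; exact posP_max_eq (by linarith)
      have e' : posP (tb - k) = posP (b - k) := by
        rw [h2]; exact posP_max_eq (by linarith)
      rw [e, e']
      exact conj1 m M hm hM a b k hk1
    · rw [h1, h2]
      exact conj2 m M hm hM a b k hk1
  · obtain ⟨hk1, hk2⟩ := hk
    have hk' : M / 2 ≤ -k := by linarith
    constructor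
    · have H := conj2 m M hm hM (-a) (-b) (-k) hk'
      have ea : -k - max (-a) (M / 4) = ta - k := by
        rw [h1]
        rcases le_total a (-(M / 4)) with h | h
        · rw [min_eq_left h, max_eq_left (by linarith)]; ring
        · rw [min_eq_right h, max_eq_right (by linarith)]; ring
      have eb : -k - max (-b) (M / 4) = tb - k := by
        rw [h2]
        rcases le_total b (-(M / 4)) with h | h
        · rw [min_eq_left h, max_eq_left (by linarith)]; ring
        · rw [min_eq_right h, max_eq_right (by linarith)]; ring
      rw [ea, eb] at H
      simp only [phi_neg, neg_sub_neg] at H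
      exact H
    · have H := conj1 m M hm hM (-a) (-b) (-k) hk'
      simp only [phi_neg, neg_sub_neg] at H
      have e : posP (k - ta) = posP (k - a) := by
        rw [h1]; exact posP_min_eq (by linarith)
      have e' : posP (k - tb) = posP (k - b) := by
        rw [h2]; exact posP_min_eq (by linarith)
      rw [e, e']
      exact H
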